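/- Let N be a positive integer and let V_1, …, V_N be finite sets. Let X be a real symmetric block matrix with N×N blocks, where block X_{ij} has size |V_i|×|V_j| and all entries of X lie in {0,1}. Suppose (1) X is positive semidefinite, (2) X_{ii} is the identity matrix of size |V_i| for every 1 ≤ i ≤ N, and (3) every row sum and every column sum of each off-diagonal block X_{ij} (i ≠ j) is at most 1. Then there exists a positive integer K and a binary matrix Y with rows indexed by the disjoint union of V_1, …, V_N and columns indexed by {1,…,K}, such that every row of Y has exactly one nonzero entry, for each i the submatrix Y_i of rows indexed by V_i has at most one nonzero entry in each column, and X = Y Yᵀ. (That is, X encodes a feasible one-to-one global alignment of N networks satisfying the cycle-consistency property.) -/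

import Mathlib

open Matrix

/-- Proposition 1: a binary PSD block matrix with identity diagonal blocks and
doubly substochastic off-diagonal blocks encodes a feasible one-to-one global
alignment, i.e. it is `Y * Yᵀ` for a cluster-indicator matrix `Y`. -/
theorem binary_psd_block_matrix_encodes_alignment
    (N : ℕ) (hN : 0 < N) (V : Fin N → Type) [∀ i, Fintype (V i)]
    [∀ i, DecidableEq (V i)]
    (X : Matrix ((i : Fin N) × V i) ((i : Fin N) × V i) ℝ)
    (hbin : ∀ u v, X u v = 0 ∨ X u v = 1)
    (hpsd : X.PosSemidef)
    (hdiag : ∀ (i : Fin N) (u v : V i), X ⟨i, u⟩ ⟨i, v⟩ = if u = v then 1 else 0)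
    (hrow : ∀ (i j : Fin N), i ≠ j → ∀ u : V i, ∑ v : V j, X ⟨i, u⟩ ⟨j, v⟩ ≤ 1)
    (hcol : ∀ (i j : Fin N), i ≠ j → ∀ v : V j, ∑ u : V i, X ⟨i, u⟩ ⟨j, v⟩ ≤ 1) :
    ∃ (K : ℕ), 0 < K ∧ ∃ Y : Matrix ((i : Fin N) × V i) (Fin K) ℝ,
      (∀ u k, Y u k = 0 ∨ Y u k = 1) ∧
      (∀ u : (i : Fin N) × V i, ∃! k, Y u k = 1) ∧
      (∀ (i : Fin N) (k : Fin K) (u v : V i), Y ⟨i, u⟩ k = 1 → Y ⟨i, v⟩ k = 1 → u = v) ∧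
      X = Y * Yᵀ := by
  classical
  let α := (i : Fin N) × V i
  have hsymm : ∀ u v : α, X u v = X v u := by
    intro u v
    have := hpsd.1.apply v u
    simpa using this
  have hone : ∀ u : α, X u u = 1 := by
    rintro ⟨i, a⟩
    simpa using hdiag i a a
  have htrans : ∀ u v w : α, X u v = 1 → X v w = 1 → X u w = 1 := by
    intro u v w huv hvw
    rcases hbin u w with h0 | h1
    · exfalso
      have hsub : (X.submatrix ![u, v, w] ![u, v, w]).PosSemidef :=
        hpsd.submatrix _
      have hq := hsub.dotProduct_mulVec_nonneg ![1, -1, 1]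
      have huw' : X w u = 0 := by rw [← hsymm]; exact h0
      have hvu : X v u = 1 := by rw [← hsymm]; exact huv
      have hwv : X w v = 1 := by rw [← hsymm]; exact hvw
      simp only [dotProduct, mulVec, Fin.sum_univ_three, Matrix.submatrix_apply] at hq
      simp only [Matrix.cons_val_zero, Matrix.cons_val_one, Matrix.head_cons,
        Matrix.cons_val_two, Matrix.tail_cons, Pi.star_apply, star_one, star_neg,
        star_trivial] at hq
      rw [hone u, hone v, hone w, huv, hvw, h0, huw', hvu, hwv] at hq
      norm_num at hq
    · exact h1
  let s : Setoid α :=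
    ⟨fun u v => X u v = 1,
      ⟨fun u => hone u, fun {u v} h => by rw [hsymm]; exact h,
        fun {u v w} h1 h2 => htrans u v w h1 h2⟩⟩
  haveI : DecidableRel s.r := fun _ _ => Classical.dec _
  haveI : DecidableEq (Quotient s) := Classical.decEq _
  let e : Quotient s ≃ Fin (Fintype.card (Quotient s)) := Fintype.equivFin _
  set K := Fintype.card (Quotient s) + 1 with hK
  let k₀ : α → Fin K := fun u => (e (Quotient.mk s u)).castSucc
  have hk₀ : ∀ u v : α, k₀ u = k₀ v ↔ X u v = 1 := by
    intro u v
    constructor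
    · intro h
      have : Quotient.mk s u = Quotient.mk s v := e.injective (Fin.castSucc_injective _ h)
      exact Quotient.exact this
    · intro h
      have : Quotient.mk s u = Quotient.mk s v := Quotient.sound h
      simp [k₀, this]
  refine ⟨K, Nat.succ_pos _, fun u k => if k = k₀ u then 1 else 0, ?_, ?_, ?_, ?_⟩
  · intro u k
    by_cases h : k = k₀ u <;> simp [h]
  · intro u
    refine ⟨k₀ u, by simp, fun k hk => ?_⟩
    by_cases h : k = k₀ u
    · exact h
    · simp [h] at hk
  · intro i k u v hu hv
    have hu' : k = k₀ ⟨i, u⟩ := by by_contra h; simp [h] at hu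
    have hv' : k = k₀ ⟨i, v⟩ := by by_contra h; simp [h] at hv
    have : X ⟨i, u⟩ ⟨i, v⟩ = 1 := (hk₀ _ _).1 (hu' ▸ hv')
    rw [hdiag] at this
    by_contra h
    simp [h] at this
  · ext u v
    show X u v = ∑ k, (if k = k₀ u then (1:ℝ) else 0) * (if k = k₀ v then (1:ℝ) else 0)
    simp only [Matrix.transpose_apply, ite_mul, one_mul, zero_mul, mul_ite, mul_one, mul_zero]
    rw [Finset.sum_ite_eq' Finset.univ (k₀ v) (fun k => if k = k₀ u then (1 : ℝ) else 0)]
    simp only [Finset.mem_univ, if_true]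
    by_cases h : k₀ v = k₀ u
    · rw [if_pos h, ← hsymm, (hk₀ v u).1 h]
    · rw [if_neg h]
      rcases hbin u v with h0 | h1
      · exact h0
      · exact absurd ((hk₀ v u).2 (by rw [hsymm]; exact h1)) h
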